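/- For every deterministic one-counter automaton A over alphabet Σ, there exists a visibly pushdown automaton à over the pushdown alphabet Σ̃ = (Σ × {c}, (Σ × {i}) ∪ {x}, Σ × {r}), where x is a fresh internal letter, such that every word accepted by à has the form ã₁ x ã₂ x … x ãₙ with each ãⱼ ∈ Σ × {c, i, r}, and L(A) = { π₁(ã₁)…π₁(ãₙ) : ã₁ x … x ãₙ ∈ L(Ã) }, where π₁ projects a pair to its first component. -/

import Mathlib

/-- Call / internal / return letter kinds of a pushdown alphabet. -/
inductive Kind : Type
  | c : Kind
  | i : Kind
  | r : Kind
deriving DecidableEq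

/-- Counter actions of a one-counter automaton: increment, decrement (pop on
empty counter leaves it at 0, mirroring the bottom-of-stack convention),
or keep. -/
inductive CAct : Type
  | inc : CAct
  | dec : CAct
  | keep : CAct

/-- A deterministic one-counter automaton (a deterministic pushdown automaton
whose stack alphabet has a single symbol, i.e., a counter). -/
structure DOCA (A : Type) where
  Q : Type
  [fintypeQ : Fintype Q]
  init : Q
  final : Set Q
  step : Q → A → Bool → Option (Q × CAct)

namespace DOCA

variable {A : Type}

def applyAct : CAct → ℕ → ℕ
  | CAct.inc, c => c + 1
  | CAct.dec, c => c - 1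
  | CAct.keep, c => c

def stepConf (M : DOCA A) (p : M.Q × ℕ) (a : A) : Option (M.Q × ℕ) :=
  (M.step p.1 a (decide (p.2 = 0))).map fun q => (q.1, applyAct q.2 p.2)

def evalFrom (M : DOCA A) : Option (M.Q × ℕ) → List A → Option (M.Q × ℕ)
  | c, [] => c
  | some p, a :: w => M.evalFrom (M.stepConf p a) w
  | none, _ :: _ => none

/-- Acceptance of a word: the run from the initial state with counter 0 is
defined and ends in a final state. -/
def accepts (M : DOCA A) (w : List A) : Prop :=
  ∃ p : M.Q × ℕ, M.evalFrom (some (M.init, 0)) w = some p ∧ p.1 ∈ M.final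

end DOCA

/-- A (nondeterministic) visibly pushdown automaton over the alphabet `A`
partitioned by `kind` into call, internal, and return letters. -/
structure VPA (A : Type) (kind : A → Kind) where
  Q : Type
  Γ : Type
  [fintypeQ : Fintype Q]
  [fintypeΓ : Fintype Γ]
  start : Set Q
  final : Set Q
  δc : Q → A → Q → Γ → Prop
  δr : Q → A → Option Γ → Q → Prop
  δi : Q → A → Q → Prop

namespace VPA

variable {A : Type} {kind : A → Kind}

/-- One step of a VPA on configurations (state, stack): a call letter pushes,
an internal letter leaves the stack unchanged, a return letter pops (or reads
the bottom of the empty stack). -/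
def Step (M : VPA A kind) (p : M.Q × List M.Γ) (a : A) (p' : M.Q × List M.Γ) : Prop :=
  match kind a with
  | Kind.c => ∃ γ : M.Γ, M.δc p.1 a p'.1 γ ∧ p'.2 = γ :: p.2
  | Kind.i => M.δi p.1 a p'.1 ∧ p'.2 = p.2
  | Kind.r => (∃ γ σ, p.2 = γ :: σ ∧ M.δr p.1 a (some γ) p'.1 ∧ p'.2 = σ) ∨
      (p.2 = [] ∧ M.δr p.1 a none p'.1 ∧ p'.2 = [])

def Reaches (M : VPA A kind) : M.Q × List M.Γ → List A → M.Q × List M.Γ → Prop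
  | p, [], p' => p = p'
  | p, a :: w, p' => ∃ q, M.Step p a q ∧ M.Reaches q w p'

def accepts (M : VPA A kind) (w : List A) : Prop :=
  ∃ q₀ ∈ M.start, ∃ p : M.Q × List M.Γ, M.Reaches (q₀, []) w p ∧ p.1 ∈ M.final

end VPA

/-- The decorated pushdown alphabet Σ̃ = (Σ × {c}, (Σ × {i}) ∪ {x}, Σ × {r}),
where the fresh separator x is `Sum.inr ()`. -/
abbrev DecAlph (A : Type) : Type := (A × Kind) ⊕ Unit

/-- The partition of the decorated alphabet: (a, c) is a call letter,
(a, i) and the fresh letter x are internal, (a, r) is a return letter. -/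
def decKind {A : Type} : DecAlph A → Kind
  | Sum.inl (_, k) => k
  | Sum.inr _ => Kind.i

/-- Interleave the separator letter x: ã₁ ã₂ … ãₙ ↦ ã₁ x ã₂ x … x ãₙ. -/
def sep {A : Type} : List (A × Kind) → List (DecAlph A)
  | [] => []
  | [a] => [Sum.inl a]
  | a :: b :: rest => Sum.inl a :: Sum.inr () :: sep (b :: rest)

section Construction

/-- Phases of the simulating VPA: initial, just read a real letter, just read x. -/
inductive Phase : Type
  | start : Phase
  | afterLetter : Phase
  | afterX : Phase
deriving DecidableEq

instance : Fintype Phase :=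
  ⟨{Phase.start, Phase.afterLetter, Phase.afterX}, by intro x; cases x <;> simp⟩

/-- The kind of letter corresponding to a counter action. -/
def kindOf : CAct → Kind
  | CAct.inc => Kind.c
  | CAct.dec => Kind.r
  | CAct.keep => Kind.i

/-- Stack encoding of a counter value: each symbol records whether the
stack below it is empty. -/
def encStack : ℕ → List Bool
  | 0 => []
  | n+1 => decide (n = 0) :: encStack n

lemma encStack_eq_nil {n : ℕ} (h : encStack n = []) : n = 0 := by
  cases n with
  | zero => rfl
  | succ m => simp [encStack] at h

variable {A : Type}

lemma evalFrom_none (M : DOCA A) (u : List A) : M.evalFrom none u = none := by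
  cases u <;> rfl

/-- The simulating VPA. -/
def trVPA (M : DOCA A) : VPA (DecAlph A) decKind where
  Q := M.Q × Bool × Phase
  Γ := Bool
  fintypeQ := @instFintypeProd _ _ M.fintypeQ _
  fintypeΓ := inferInstance
  start := {(M.init, true, Phase.start)}
  final := {p | p.1 ∈ M.final ∧ p.2.2 ≠ Phase.afterX}
  δc := fun p b p' γ => ∃ a, b = Sum.inl (a, Kind.c) ∧
      (p.2.2 = Phase.start ∨ p.2.2 = Phase.afterX) ∧
      M.step p.1 a p.2.1 = some (p'.1, CAct.inc) ∧ p'.2.1 = false ∧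
      p'.2.2 = Phase.afterLetter ∧ γ = p.2.1
  δr := fun p b oγ p' => ∃ a, b = Sum.inl (a, Kind.r) ∧
      (p.2.2 = Phase.start ∨ p.2.2 = Phase.afterX) ∧ p'.2.2 = Phase.afterLetter ∧
      ((∃ γ, oγ = some γ ∧ p.2.1 = false ∧
          M.step p.1 a false = some (p'.1, CAct.dec) ∧ p'.2.1 = γ) ∨
        (oγ = none ∧ p.2.1 = true ∧
          M.step p.1 a true = some (p'.1, CAct.dec) ∧ p'.2.1 = true))
  δi := fun p b p' =>
      (∃ a, b = Sum.inl (a, Kind.i) ∧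
        (p.2.2 = Phase.start ∨ p.2.2 = Phase.afterX) ∧
        M.step p.1 a p.2.1 = some (p'.1, CAct.keep) ∧ p'.2.1 = p.2.1 ∧
        p'.2.2 = Phase.afterLetter) ∨
      (b = Sum.inr () ∧ p.2.2 = Phase.afterLetter ∧ p'.1 = p.1 ∧ p'.2.1 = p.2.1 ∧
        p'.2.2 = Phase.afterX)

end Construction


section Lemmas

variable {A : Type} (M : DOCA A)

lemma trVPA_stepA {q : M.Q} {n : ℕ} {ph : Phase}
    (hph : ph = Phase.start ∨ ph = Phase.afterX) {a : A} {q₁ : M.Q} {act : CAct}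
    (h : M.step q a (decide (n = 0)) = some (q₁, act)) :
    (trVPA M).Step ((q, decide (n = 0), ph), encStack n) (Sum.inl (a, kindOf act))
      ((q₁, decide (DOCA.applyAct act n = 0), Phase.afterLetter),
        encStack (DOCA.applyAct act n)) := by
  cases act with
  | inc =>
      show ∃ γ : Bool, _ ∧ _
      refine ⟨decide (n = 0), ⟨a, rfl, hph, ?_, ?_, rfl, rfl⟩, ?_⟩
      · exact h
      · simp [DOCA.applyAct]
      · rfl
  | keep =>
      show _ ∧ _
      exact ⟨Or.inl ⟨a, rfl, hph, h, rfl, rfl⟩, rfl⟩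
  | dec =>
      show (∃ γ σ, _) ∨ _
      cases n with
      | zero =>
          right
          exact ⟨rfl, ⟨a, rfl, hph, rfl, Or.inr ⟨rfl, rfl, h, rfl⟩⟩, rfl⟩
      | succ m =>
          left
          refine ⟨decide (m = 0), encStack m, rfl,
            ⟨a, rfl, hph, rfl, Or.inl ⟨decide (m = 0), rfl, by simp, ?_, rfl⟩⟩, rfl⟩
          simpa using h

lemma trVPA_xStepA (q : M.Q) (z : Bool) (s : List Bool) :
    (trVPA M).Step ((q, z, Phase.afterLetter), s) (Sum.inr ())
      ((q, z, Phase.afterX), s) := by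
  show _ ∧ _
  exact ⟨Or.inr ⟨rfl, rfl, rfl, rfl, rfl⟩, rfl⟩

lemma trVPA_stepB {q : M.Q} {n : ℕ} {ph : Phase} {b : A × Kind}
    {p' : ((trVPA M).Q × List (trVPA M).Γ)}
    (h : (trVPA M).Step ((q, decide (n = 0), ph), encStack n) (Sum.inl b) p') :
    ∃ q₁ act, M.step q b.1 (decide (n = 0)) = some (q₁, act) ∧ b.2 = kindOf act ∧
      p' = ((q₁, decide (DOCA.applyAct act n = 0), Phase.afterLetter),
        encStack (DOCA.applyAct act n)) := by
  obtain ⟨a, k⟩ := b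
  obtain ⟨p'1, p'2⟩ := p'
  obtain ⟨q', z', ph'⟩ := p'1
  cases k with
  | c =>
      obtain ⟨γ, ⟨a', ha, hph, hstep, hz, hph', hγ⟩, hs⟩ := h
      obtain ⟨rfl, -⟩ : a = a' ∧ Kind.c = Kind.c := by simpa using ha
      refine ⟨q', CAct.inc, hstep, rfl, ?_⟩
      simp only [DOCA.applyAct] at *
      simp_all [encStack]
      rfl
  | i =>
      rcases h with ⟨hδ, hs⟩
      rcases hδ with ⟨a', ha, hph, hstep, hz, hph'⟩ | ⟨ha, _⟩
      · obtain ⟨rfl, _⟩ : a = a' ∧ Kind.i = Kind.i := by simpa using ha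
        refine ⟨q', CAct.keep, hstep, rfl, ?_⟩
        simp_all [DOCA.applyAct]
        rfl
      · exact absurd ha (by simp)
  | r =>
      rcases h with ⟨γ, σ, hsrc, ⟨a', ha, hph, hph', hd⟩, hs⟩ | ⟨hsrc, ⟨a', ha, hph, hph', hd⟩, hs⟩
      · obtain ⟨rfl, _⟩ : a = a' ∧ Kind.r = Kind.r := by simpa using ha
        cases n with
        | zero => simp [encStack] at hsrc
        | succ m =>
            obtain ⟨hγ, hσ⟩ : γ = decide (m = 0) ∧ σ = encStack m := by
              exact List.cons.inj hsrc.symm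
            rcases hd with ⟨γ', hγ', hz0, hstep, hz'⟩ | ⟨hnone, _⟩
            · obtain rfl : γ = γ' := Option.some.inj hγ'
              refine ⟨q', CAct.dec, by simpa using hstep, rfl, ?_⟩
              simp_all [DOCA.applyAct]
              rfl
            · simp at hnone
      · obtain ⟨rfl, _⟩ : a = a' ∧ Kind.r = Kind.r := by simpa using ha
        obtain rfl : n = 0 := encStack_eq_nil hsrc
        rcases hd with ⟨γ', hγ', _⟩ | ⟨hnone, hz0, hstep, hz'⟩
        · simp at hγ'
        · refine ⟨q', CAct.dec, by simpa using hstep, rfl, ?_⟩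
          simp_all [DOCA.applyAct, encStack]
          rfl

lemma trVPA_xStepB {p p' : ((trVPA M).Q × List (trVPA M).Γ)}
    (h : (trVPA M).Step p (Sum.inr ()) p') :
    p.1.2.2 = Phase.afterLetter ∧
      p' = ((p.1.1, p.1.2.1, Phase.afterX), p.2) := by
  rcases h with ⟨hδ, hs⟩
  rcases hδ with ⟨a', ha, _⟩ | ⟨_, hph, h1, h2, h3⟩
  · exact absurd ha (by simp)
  · refine ⟨hph, ?_⟩
    obtain ⟨⟨x1, x2, x3⟩, xs⟩ := p'
    simp_all
    rfl

lemma trVPA_letter_phase {p p' : ((trVPA M).Q × List (trVPA M).Γ)} {b : A × Kind}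
    (h : (trVPA M).Step p (Sum.inl b) p') :
    (p.1.2.2 = Phase.start ∨ p.1.2.2 = Phase.afterX) ∧ p'.1.2.2 = Phase.afterLetter := by
  obtain ⟨a, k⟩ := b
  cases k with
  | c => obtain ⟨γ, ⟨a', ha, hph, hstep, hz, hph', hγ⟩, hs⟩ := h; exact ⟨hph, hph'⟩
  | i =>
      rcases h with ⟨hδ, hs⟩
      rcases hδ with ⟨a', ha, hph, _, _, hph'⟩ | ⟨ha, _⟩
      · exact ⟨hph, hph'⟩
      · exact absurd ha (by simp)
  | r =>
      rcases h with ⟨_, _, _, ⟨a', ha, hph, hph', _⟩, _⟩ | ⟨_, ⟨a', ha, hph, hph', _⟩, _⟩ <;>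
        exact ⟨hph, hph'⟩

lemma trVPA_shape : ∀ (w : List (DecAlph A)) (p p' : ((trVPA M).Q × List (trVPA M).Γ)),
    (trVPA M).Reaches p w p' → p.1.2.2 ≠ Phase.afterLetter →
    p'.1.2.2 ≠ Phase.afterX → ∃ ws : List (A × Kind), w = sep ws
  | [], _, _, _, _, _ => ⟨[], rfl⟩
  | b :: w', p, p', h, h1, h2 => by
      obtain ⟨mid, hstep, hrest⟩ := h
      obtain la | u := b
      · have hph := trVPA_letter_phase M hstep
        cases w' with
        | nil =>
            obtain rfl : mid = p' := hrest
            exact ⟨[la], rfl⟩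
        | cons b2 w'' =>
            obtain ⟨mid2, hstep2, hrest2⟩ := hrest
            obtain la2 | u2 := b2
            · exact absurd (trVPA_letter_phase M hstep2).1 (by simp [hph.2])
            · cases u2
              obtain ⟨-, hmid2⟩ := trVPA_xStepB M hstep2
              have hmid2ph : mid2.1.2.2 = Phase.afterX := by rw [hmid2]
              by_cases hw : w'' = []
              · subst hw
                obtain rfl : mid2 = p' := hrest2
                exact absurd hmid2ph h2
              · obtain ⟨ws', hws'⟩ := trVPA_shape w'' mid2 p' hrest2
                  (by simp [hmid2ph]) h2
                cases ws' with
                | nil => rw [hws'] at hw; exact absurd rfl hw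
                | cons c rest =>
                    exact ⟨la :: c :: rest, by simp [sep, hws']⟩
      · cases u
        obtain ⟨hph, -⟩ := trVPA_xStepB M hstep
        exact absurd hph h1
termination_by w => w.length

lemma trVPA_fwd : ∀ (u : List A) (q : M.Q) (n : ℕ) (r : M.Q × ℕ) (ph : Phase),
    (ph = Phase.start ∨ ph = Phase.afterX) →
    M.evalFrom (some (q, n)) u = some r → u ≠ [] →
    ∃ ws : List (A × Kind), ws ≠ [] ∧ ws.map Prod.fst = u ∧
      (trVPA M).Reaches ((q, decide (n = 0), ph), encStack n) (sep ws)
        ((r.1, decide (r.2 = 0), Phase.afterLetter), encStack r.2)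
  | [], _, _, _, _, _, _, hne => absurd rfl hne
  | a :: u', q, n, r, ph, hph, hev, _ => by
      have hev' : M.evalFrom (M.stepConf (q, n) a) u' = some r := hev
      match hstep : M.step q a (decide (n = 0)) with
      | none =>
          rw [DOCA.stepConf] at hev'
          simp only [hstep, Option.map_none] at hev'
          rw [evalFrom_none] at hev'
          exact absurd hev' (by simp)
      | some (q₁, act) =>
          have hsc : M.stepConf (q, n) a = some (q₁, DOCA.applyAct act n) := by
            simp [DOCA.stepConf, hstep]
          rw [hsc] at hev'
          have hS := trVPA_stepA M hph hstep
          cases u' with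
          | nil =>
              obtain rfl : r = (q₁, DOCA.applyAct act n) := by
                simpa [DOCA.evalFrom] using hev'.symm
              exact ⟨[(a, kindOf act)], by simp, by simp, _, hS, rfl⟩
          | cons a2 u'' =>
              obtain ⟨ws', hne', hmap', hR'⟩ :=
                trVPA_fwd (a2 :: u'') q₁ (DOCA.applyAct act n) r Phase.afterX
                  (Or.inr rfl) hev' (by simp)
              refine ⟨(a, kindOf act) :: ws', by simp, by simp [hmap'], ?_⟩
              cases ws' with
              | nil => exact absurd rfl hne'
              | cons c rest =>
                  exact ⟨_, hS, _, trVPA_xStepA M q₁ _ _, hR'⟩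

lemma trVPA_bwd : ∀ (ws : List (A × Kind)) (q : M.Q) (n : ℕ) (ph : Phase)
    (p' : ((trVPA M).Q × List (trVPA M).Γ)),
    (trVPA M).Reaches ((q, decide (n = 0), ph), encStack n) (sep ws) p' →
    ∃ n', M.evalFrom (some (q, n)) (ws.map Prod.fst) = some (p'.1.1, n')
  | [], q, n, ph, p', h => by
      obtain rfl : ((q, decide (n = 0), ph), encStack n) = p' := h
      exact ⟨n, rfl⟩
  | [b], q, n, ph, p', h => by
      obtain ⟨mid, hstep, hrest⟩ := h
      obtain rfl : mid = p' := hrest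
      obtain ⟨q₁, act, hstep', hk, rfl⟩ := trVPA_stepB M hstep
      refine ⟨DOCA.applyAct act n, ?_⟩
      simp [DOCA.evalFrom, DOCA.stepConf, hstep']
  | b :: b2 :: rest, q, n, ph, p', h => by
      obtain ⟨mid, hstep, mid2, hstep2, hrest2⟩ := h
      obtain ⟨q₁, act, hstep', hk, rfl⟩ := trVPA_stepB M hstep
      obtain ⟨_, rfl⟩ := trVPA_xStepB M hstep2
      obtain ⟨n', hev⟩ := trVPA_bwd (b2 :: rest) q₁ (DOCA.applyAct act n)
        Phase.afterX p' hrest2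
      refine ⟨n', ?_⟩
      show M.evalFrom (M.stepConf (q, n) b.1) ((b2 :: rest).map Prod.fst) = _
      rw [show M.stepConf (q, n) b.1 = some (q₁, DOCA.applyAct act n) by
        simp [DOCA.stepConf, hstep']]
      exact hev
termination_by ws => ws.length

end Lemmas

/-- For every deterministic one-counter automaton A over Σ there is a visibly
pushdown automaton Ã over the decorated pushdown alphabet Σ̃ (with the fresh
internal letter x) such that every word accepted by Ã has the form
ã₁ x ã₂ x … x ãₙ, and L(A) = { π₁(ã₁)…π₁(ãₙ) : ã₁ x … x ãₙ ∈ L(Ã) }. -/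
theorem doca_to_vpa (A : Type) (M : DOCA A) :
    ∃ Mt : VPA (DecAlph A) decKind,
      (∀ w : List (DecAlph A), Mt.accepts w → ∃ ws : List (A × Kind), w = sep ws) ∧
      (∀ u : List A, M.accepts u ↔
        ∃ ws : List (A × Kind), u = ws.map Prod.fst ∧ Mt.accepts (sep ws)) := by
  refine ⟨trVPA M, ?_, ?_⟩
  · rintro w ⟨q₀, hq₀, p, hr, hfin⟩
    obtain rfl : q₀ = (M.init, true, Phase.start) := hq₀
    exact trVPA_shape M w _ p hr (by simp) hfin.2
  · intro u
    constructor
    · rintro ⟨p, hev, hfin⟩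
      cases u with
      | nil =>
          obtain rfl : p = (M.init, 0) := by simpa [DOCA.evalFrom] using hev.symm
          refine ⟨[], rfl, (M.init, true, Phase.start), rfl,
            ((M.init, true, Phase.start), []), rfl, hfin, by simp⟩
      | cons a u' =>
          obtain ⟨ws, -, hmap, hR⟩ := trVPA_fwd M (a :: u') M.init 0 p Phase.start
            (Or.inl rfl) hev (by simp)
          exact ⟨ws, hmap.symm, (M.init, true, Phase.start), rfl, _, hR,
            hfin, by simp⟩
    · rintro ⟨ws, rfl, q₀, hq₀, p', hR, hfin⟩
      obtain rfl : q₀ = (M.init, true, Phase.start) := hq₀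
      obtain ⟨n', hev⟩ := trVPA_bwd M ws M.init 0 Phase.start p' hR
      exact ⟨(p'.1.1, n'), hev, hfin.1⟩
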